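/- Let U ∈ ℝ^{m×m} and let Y* be an optimal solution of the projection problem min ‖Y − U‖_2^2 subject to the support graph of Y being acyclic. Let π* be a topological order of the support graph of Y* (arcs go from higher-order to lower-order nodes, i.e., Y*_{jk} ≠ 0 implies π*(j) > π*(k)). Then for all pairs (j,k) with π*(j) > π*(k), Y*_{jk} = U_{jk}. -/

import Mathlib

/-- In an optimal projection with topological order π*, every position with
π*(j) > π*(k) carries the full value U_{jk}. -/
theorem stmt5 (m : ℕ) (U Ystar : Fin m → Fin m → ℝ) (π : Equiv.Perm (Fin m))
    (hfeas : ∀ v, ¬ Relation.TransGen (fun j k => Ystar j k ≠ 0) v v)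
    (htopo : ∀ j k, Ystar j k ≠ 0 → π k < π j)
    (hopt : ∀ Y : Fin m → Fin m → ℝ,
      (∀ v, ¬ Relation.TransGen (fun j k => Y j k ≠ 0) v v) →
      ∑ j, ∑ k, (Ystar j k - U j k) ^ 2 ≤ ∑ j, ∑ k, (Y j k - U j k) ^ 2) :
    ∀ j k, π k < π j → Ystar j k = U j k := by
  intro j k hjk
  by_contra hne
  set Y : Fin m → Fin m → ℝ := fun a b => if a = j ∧ b = k then U j k else Ystar a b with hY
  have hedge : ∀ a b, Y a b ≠ 0 → π b < π a := by
    intro a b hab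
    by_cases h : a = j ∧ b = k
    · rw [h.1, h.2]; exact hjk
    · apply htopo; simpa [hY, h] using hab
  have hfeasY : ∀ v, ¬ Relation.TransGen (fun a b => Y a b ≠ 0) v v := by
    intro v hv
    have htr : Transitive (fun a b : Fin m => π b < π a) := fun a b c h1 h2 => h2.trans h1
    have := (@Relation.transGen_eq_self _ _ ⟨htr⟩) ▸ (Relation.TransGen.mono hedge v v hv)
    exact lt_irrefl _ this
  have hle := hopt Y hfeasY
  have hlt : ∑ a, ∑ b, (Y a b - U a b) ^ 2 < ∑ a, ∑ b, (Ystar a b - U a b) ^ 2 := by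
    refine Finset.sum_lt_sum (fun a _ => ?_) ⟨j, Finset.mem_univ j, ?_⟩
    · apply Finset.sum_le_sum
      intro b _
      by_cases h : a = j ∧ b = k
      · simp [hY, h.1, h.2]; positivity
      · simp [hY, h]
    · refine Finset.sum_lt_sum (fun b _ => ?_) ⟨k, Finset.mem_univ k, ?_⟩
      · by_cases h : b = k
        · simp [hY, h]; positivity
        · simp [hY, h]
      · simp [hY]
        have h0 : Ystar j k - U j k ≠ 0 := sub_ne_zero.mpr hne
        positivity
  exact absurd hle (not_le.mpr hlt)
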